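/- Let K be the Erdős–Rényi random graph G(n,p) with n ≥ 2 and p ∈ (0,1), let Y be its number of isolated vertices, and let Y^s be the number of isolated vertices of the graph obtained from K by deleting all edges incident to a uniformly chosen vertex V' independent of K. Then for all θ ≥ 0, E(e^{θY^s} − e^{θY}) ≤ (θ γ_θ / 2) · E(e^{θY}), where γ_θ = e^θ(φ_θ + α_θ) + (n−1)p + 1 with α_θ = (p e^θ + 1 − p)^{n−1} and φ_θ = (n−1) p e^θ (p e^θ + 1 − p)^{n−2}. -/

import Mathlib

open MeasureTheory ProbabilityTheory Real Finset

noncomputable section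

namespace ErdosRenyiIsolated

/-- Index set for the potential edges of a graph on `Fin n`. -/
abbrev EdgeIdx (n : ℕ) := {e : Fin n × Fin n // e.1 < e.2}

/-- Adjacency relation of the random graph encoded by `ω` : `u` and `v` are adjacent
if the corresponding edge indicator is `true`. -/
def adj {n : ℕ} (ω : EdgeIdx n → Bool) (u v : Fin n) : Prop :=
  if h : u < v then ω ⟨(u, v), h⟩ = true
  else if h' : v < u then ω ⟨(v, u), h'⟩ = true
  else False

instance {n : ℕ} (ω : EdgeIdx n → Bool) (u v : Fin n) : Decidable (adj ω u v) := by
  unfold adj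
  split
  · exact inferInstance
  · split
    · exact inferInstance
    · exact inferInstance

/-- Degree of vertex `v` in the graph encoded by `ω`. -/
def deg {n : ℕ} (ω : EdgeIdx n → Bool) (v : Fin n) : ℕ :=
  (Finset.univ.filter fun w => adj ω v w).card

/-- The number of isolated vertices of the graph encoded by `ω`. -/
def isolCount {n : ℕ} (ω : EdgeIdx n → Bool) : ℕ :=
  (Finset.univ.filter fun v => deg ω v = 0).card

/-- The Bernoulli(p) measure on `Bool`. -/
def bern (p : ℝ) : Measure Bool :=
  ENNReal.ofReal p • Measure.dirac true + ENNReal.ofReal (1 - p) • Measure.dirac false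

instance (p : ℝ) : IsFiniteMeasure (bern p) := by
  constructor
  have h : bern p Set.univ ≤ ENNReal.ofReal p + ENNReal.ofReal (1 - p) := by
    simp [bern]
  exact lt_of_le_of_lt h (ENNReal.add_lt_top.mpr ⟨ENNReal.ofReal_lt_top, ENNReal.ofReal_lt_top⟩)

/-- The Erdős–Rényi random graph measure `G(n,p)`: the edge indicators are i.i.d.
Bernoulli(p). -/
def gnp (n : ℕ) (p : ℝ) : Measure (EdgeIdx n → Bool) :=
  Measure.pi fun _ => bern p

/-- The Erdős–Rényi measure together with an independent uniformly chosen vertex. -/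
def gnpV (n : ℕ) (p : ℝ) : Measure ((EdgeIdx n → Bool) × Fin n) :=
  (gnp n p).prod (uniformOn (Set.univ : Set (Fin n)))

/-- Adjacency in the graph obtained by deleting all edges incident to `v'`. -/
def adjDel {n : ℕ} (ω : EdgeIdx n → Bool) (v' u v : Fin n) : Prop :=
  adj ω u v ∧ u ≠ v' ∧ v ≠ v'

instance {n : ℕ} (ω : EdgeIdx n → Bool) (v' u v : Fin n) : Decidable (adjDel ω v' u v) := by
  unfold adjDel; exact inferInstance

/-- Degree of `v` in the graph `ω` with all edges incident to `v'` deleted. -/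
def degDel {n : ℕ} (ω : EdgeIdx n → Bool) (v' v : Fin n) : ℕ :=
  (Finset.univ.filter fun w => adjDel ω v' v w).card

/-- Number of isolated vertices in the graph `ω` with all edges incident to `v'` deleted. -/
def isolCountDel {n : ℕ} (ω : EdgeIdx n → Bool) (v' : Fin n) : ℕ :=
  (Finset.univ.filter fun v => degDel ω v' v = 0).card


variable {ι : Type*} [Fintype ι] [DecidableEq ι]

/-- product Bernoulli weight -/
def wt (p : ℝ) (ω : ι → Bool) : ℝ := ∏ i, (if ω i then p else 1 - p)

lemma wt_nonneg {p : ℝ} (hp0 : 0 ≤ p) (hp1 : p ≤ 1) (ω : ι → Bool) : 0 ≤ wt p ω :=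
  Finset.prod_nonneg fun i _ => by by_cases h : ω i <;> simp [h] <;> linarith

lemma sum_prod_bool (Ψ : ι → Bool → ℝ) :
    ∑ ω : ι → Bool, ∏ i, Ψ i (ω i) = ∏ i, (Ψ i true + Ψ i false) := by
  classical
  have h := Finset.prod_univ_sum (fun _ : ι => (univ : Finset Bool)) Ψ
  rw [Fintype.piFinset_univ] at h
  rw [← h]
  refine Finset.prod_congr rfl fun i _ => ?_
  exact Fintype.sum_bool fun b => Ψ i b

lemma wt_sum_one {p : ℝ} : ∑ ω : ι → Bool, wt p ω = 1 := by
  have h := sum_prod_bool (ι := ι) (fun i b => if b then p else 1 - p)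
  simp only [if_true, if_false] at h
  unfold wt
  rw [h]
  simp

/-- sum over false-filter equals sum over true-filter for `i`-invariant functions -/
lemma sum_filter_flip (i : ι) (G : (ι → Bool) → ℝ)
    (hG : ∀ ω b, G (Function.update ω i b) = G ω) :
    ∑ ω ∈ univ.filter (fun ω : ι → Bool => ω i = false), G ω
      = ∑ ω ∈ univ.filter (fun ω : ι → Bool => ω i = true), G ω := by
  refine Finset.sum_bij' (fun ω _ => Function.update ω i true)
    (fun ω _ => Function.update ω i false) ?_ ?_ ?_ ?_ ?_
  · intro a ha; simp
  · intro a ha; simp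
  · intro a ha
    simp only [mem_filter, mem_univ, true_and] at ha
    show Function.update (Function.update a i true) i false = a
    rw [Function.update_idem, ← ha, Function.update_eq_self]
  · intro a ha
    simp only [mem_filter, mem_univ, true_and] at ha
    show Function.update (Function.update a i false) i true = a
    rw [Function.update_idem, ← ha, Function.update_eq_self]
  · intro a ha; exact (hG a true).symm

lemma invariant_of_update {i : ι} {G : (ι → Bool) → ℝ}
    (hG : ∀ ω b, G (Function.update ω i b) = G ω) (ω : ι → Bool) (b : Bool) :
    True := trivial

/-- auxiliary: sum of wt times an i-invariant function localizes -/
lemma wsum_invariant {p : ℝ} (i : ι) (G : (ι → Bool) → ℝ)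
    (hG : ∀ ω b, G (Function.update ω i b) = G ω) :
    ∑ ω : ι → Bool, wt p ω * G ω
      = ∑ ω ∈ univ.filter (fun ω : ι → Bool => ω i = true),
          (∏ j ∈ univ.erase i, (if ω j then p else 1 - p)) * G ω := by
  classical
  have key : ∀ ω : ι → Bool, wt p ω * G ω
      = (if ω i = true then p * ((∏ j ∈ univ.erase i, (if ω j then p else 1 - p)) * G ω)
         else (1 - p) * ((∏ j ∈ univ.erase i, (if ω j then p else 1 - p)) * G ω)) := by
    intro ω
    unfold wt
    rw [← Finset.mul_prod_erase univ _ (mem_univ i)]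
    by_cases h : ω i <;> simp [h, mul_assoc]
  rw [Finset.sum_congr rfl fun ω _ => key ω, Finset.sum_ite]
  have hWG : ∀ (ω : ι → Bool) (b : Bool),
      (∏ j ∈ univ.erase i, (if Function.update ω i b j then p else 1 - p))
        * G (Function.update ω i b)
      = (∏ j ∈ univ.erase i, (if ω j then p else 1 - p)) * G ω := by
    intro ω b
    rw [hG]
    congr 1
    refine Finset.prod_congr rfl fun j hj => ?_
    rw [Function.update_of_ne (Finset.mem_erase.mp hj).1]
  have hflip := sum_filter_flip i
    (fun ω => (∏ j ∈ univ.erase i, (if ω j then p else 1 - p)) * G ω) hWG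
  rw [← Finset.mul_sum, ← Finset.mul_sum]
  have : (univ.filter fun ω : ι → Bool => ¬ω i = true)
      = (univ.filter fun ω : ι → Bool => ω i = false) := by
    apply Finset.filter_congr; intro ω _; simp
  rw [this, hflip]
  ring

/-- the splitting identity -/
lemma wsum_split {p : ℝ} (i : ι) (h : (ι → Bool) → ℝ) :
    ∑ ω : ι → Bool, wt p ω * h ω
      = p * ∑ ω : ι → Bool, wt p ω * h (Function.update ω i true)
        + (1 - p) * ∑ ω : ι → Bool, wt p ω * h (Function.update ω i false) := by
  classical
  have inv : ∀ b : Bool, ∀ (ω : ι → Bool) (b' : Bool),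
      h (Function.update (Function.update ω i b') i b) = h (Function.update ω i b) := by
    intro b ω b'; rw [Function.update_idem]
  rw [wsum_invariant i (fun ω => h (Function.update ω i true)) (inv true),
      wsum_invariant i (fun ω => h (Function.update ω i false)) (inv false)]
  -- LHS: expand as in wsum_invariant
  have key : ∀ ω : ι → Bool, wt p ω * h ω
      = (if ω i = true then p * ((∏ j ∈ univ.erase i, (if ω j then p else 1 - p)) * h ω)
         else (1 - p) * ((∏ j ∈ univ.erase i, (if ω j then p else 1 - p)) * h ω)) := by
    intro ω
    unfold wt
    rw [← Finset.mul_prod_erase univ _ (mem_univ i)]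
    by_cases h' : ω i <;> simp [h', mul_assoc]
  rw [Finset.sum_congr rfl fun ω _ => key ω, Finset.sum_ite]
  rw [← Finset.mul_sum, ← Finset.mul_sum]
  have hfalse : (univ.filter fun ω : ι → Bool => ¬ω i = true)
      = (univ.filter fun ω : ι → Bool => ω i = false) := by
    apply Finset.filter_congr; intro ω _; simp
  rw [hfalse]
  congr 1
  · congr 1
    refine Finset.sum_congr rfl fun ω hω => ?_
    simp only [mem_filter, mem_univ, true_and] at hω
    congr 2
    rw [← hω, Function.update_eq_self]
  · congr 1
    -- need: ∑_{false} W * h ω = ∑_{true} W * h (update ω i false)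
    have hWG : ∀ (ω : ι → Bool) (b : Bool),
        (∏ j ∈ univ.erase i, (if Function.update ω i b j then p else 1 - p))
          * h (Function.update (Function.update ω i b) i false)
        = (∏ j ∈ univ.erase i, (if ω j then p else 1 - p)) * h (Function.update ω i false) := by
      intro ω b
      rw [Function.update_idem]
      congr 1
      refine Finset.prod_congr rfl fun j hj => ?_
      rw [Function.update_of_ne (Finset.mem_erase.mp hj).1]
    have hflip := sum_filter_flip i
      (fun ω => (∏ j ∈ univ.erase i, (if ω j then p else 1 - p))
        * h (Function.update ω i false)) hWG
    rw [← hflip]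
    refine Finset.sum_congr rfl fun ω hω => ?_
    simp only [mem_filter, mem_univ, true_and] at hω
    congr 2
    rw [← hω, Function.update_eq_self]

namespace Harris

/-- `f` depends only on coordinates in `s` -/
def DepOn (f : (ι → Bool) → ℝ) (s : Finset ι) : Prop :=
  ∀ ω ω' : ι → Bool, (∀ i ∈ s, ω i = ω' i) → f ω = f ω'

lemma update_mono {ω ω' : ι → Bool} (h : ω ≤ ω') (i : ι) (b : Bool) :
    Function.update ω i b ≤ Function.update ω' i b := by
  intro j
  by_cases hj : j = i
  · subst hj; simp
  · simpa [Function.update_of_ne hj] using h j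

lemma update_le_update {ω : ι → Bool} (i : ι) :
    Function.update ω i false ≤ Function.update ω i true := by
  intro j
  by_cases hj : j = i
  · subst hj; simp
  · simp [Function.update_of_ne hj]

lemma harris_aux {p : ℝ} (hp0 : 0 ≤ p) (hp1 : p ≤ 1) (s : Finset ι) :
    ∀ f g : (ι → Bool) → ℝ, DepOn f s → DepOn g s → Antitone f → Monotone g →
      ∑ ω : ι → Bool, wt p ω * (f ω * g ω)
        ≤ (∑ ω : ι → Bool, wt p ω * f ω) * (∑ ω : ι → Bool, wt p ω * g ω) := by
  classical
  induction s using Finset.induction_on with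
  | empty =>
      intro f g hf hg _ _
      have hfc : ∀ ω : ι → Bool, f ω = f (fun _ => false) := fun ω => hf _ _ (by simp)
      have hgc : ∀ ω : ι → Bool, g ω = g (fun _ => false) := fun ω => hg _ _ (by simp)
      refine le_of_eq ?_
      calc ∑ ω : ι → Bool, wt p ω * (f ω * g ω)
          = (f (fun _ => false) * g (fun _ => false)) * ∑ ω : ι → Bool, wt p ω := by
            rw [Finset.mul_sum]
            exact Finset.sum_congr rfl fun ω _ => by rw [hfc ω, hgc ω]; ring
        _ = (f (fun _ => false)) * (g (fun _ => false)) := by rw [wt_sum_one]; ring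
        _ = (∑ ω : ι → Bool, wt p ω * f ω) * (∑ ω : ι → Bool, wt p ω * g ω) := by
            have h1 : ∑ ω : ι → Bool, wt p ω * f ω = f (fun _ => false) := by
              rw [Finset.sum_congr rfl fun ω _ => by rw [hfc ω], ← Finset.sum_mul, wt_sum_one,
                one_mul]
            have h2 : ∑ ω : ι → Bool, wt p ω * g ω = g (fun _ => false) := by
              rw [Finset.sum_congr rfl fun ω _ => by rw [hgc ω], ← Finset.sum_mul, wt_sum_one,
                one_mul]
            rw [h1, h2]
  | @insert i s his ih =>
      intro f g hf hg haf hmg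
      set fT := fun ω : ι → Bool => f (Function.update ω i true) with hfT
      set fF := fun ω : ι → Bool => f (Function.update ω i false) with hfF
      set gT := fun ω : ι → Bool => g (Function.update ω i true) with hgT
      set gF := fun ω : ι → Bool => g (Function.update ω i false) with hgF
      have dep : ∀ (k : (ι → Bool) → ℝ), DepOn k (insert i s) → ∀ b,
          DepOn (fun ω => k (Function.update ω i b)) s := by
        intro k hk b ω ω' hωω'
        refine hk _ _ fun j hj => ?_
        by_cases hji : j = i
        · subst hji; simp
        · rw [Function.update_of_ne hji, Function.update_of_ne hji]
          exact hωω' j ((Finset.mem_insert.mp hj).resolve_left hji)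
      have hIH1 := ih fT gT (dep f hf true) (dep g hg true)
        (fun ω ω' h => haf (update_mono h i true)) (fun ω ω' h => hmg (update_mono h i true))
      have hIH2 := ih fF gF (dep f hf false) (dep g hg false)
        (fun ω ω' h => haf (update_mono h i false)) (fun ω ω' h => hmg (update_mono h i false))
      have hsplit := wsum_split (p := p) i (fun ω => f ω * g ω)
      have hsplitf := wsum_split (p := p) i f
      have hsplitg := wsum_split (p := p) i g
      rw [hsplit, hsplitf, hsplitg]
      have hq0 : 0 ≤ 1 - p := by linarith
      -- abbreviations
      set A := ∑ ω : ι → Bool, wt p ω * fT ω with hA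
      set B := ∑ ω : ι → Bool, wt p ω * fF ω with hB
      set C := ∑ ω : ι → Bool, wt p ω * gT ω with hC
      set D := ∑ ω : ι → Bool, wt p ω * gF ω with hD
      have hAB : A ≤ B := by
        refine Finset.sum_le_sum fun ω _ => ?_
        have := haf (update_le_update (ω := ω) i)
        exact mul_le_mul_of_nonneg_left this (wt_nonneg hp0 hp1 ω)
      have hDC : D ≤ C := by
        refine Finset.sum_le_sum fun ω _ => ?_
        have := hmg (update_le_update (ω := ω) i)
        exact mul_le_mul_of_nonneg_left this (wt_nonneg hp0 hp1 ω)
      have step1 : p * (∑ ω : ι → Bool, wt p ω * (fT ω * gT ω))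
          + (1 - p) * (∑ ω : ι → Bool, wt p ω * (fF ω * gF ω))
          ≤ p * (A * C) + (1 - p) * (B * D) := by
        have h1 := mul_le_mul_of_nonneg_left hIH1 hp0
        have h2 := mul_le_mul_of_nonneg_left hIH2 hq0
        linarith
      have step2 : p * (A * C) + (1 - p) * (B * D)
          ≤ (p * A + (1 - p) * B) * (p * C + (1 - p) * D) := by
        nlinarith [mul_nonneg (mul_nonneg hp0 hq0)
          (mul_nonneg (sub_nonneg.mpr hAB) (sub_nonneg.mpr hDC))]
      exact le_trans step1 step2

lemma harris {p : ℝ} (hp0 : 0 ≤ p) (hp1 : p ≤ 1) (f g : (ι → Bool) → ℝ)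
    (hf : Antitone f) (hg : Monotone g) :
    ∑ ω : ι → Bool, wt p ω * (f ω * g ω)
      ≤ (∑ ω : ι → Bool, wt p ω * f ω) * (∑ ω : ι → Bool, wt p ω * g ω) := by
  classical
  refine harris_aux hp0 hp1 univ f g ?_ ?_ hf hg
  · intro ω ω' h; exact congrArg f (funext fun i => h i (mem_univ i))
  · intro ω ω' h; exact congrArg g (funext fun i => h i (mem_univ i))

end Harris

section Expect

variable {p : ℝ}

lemma wsum_prod_ite (hpq : p + (1 - p) = 1) (s : Finset ι) (x : ℝ) :
    ∑ ω : ι → Bool, wt p ω * ∏ e ∈ s, (if ω e then x else 1)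
      = (p * x + (1 - p)) ^ s.card := by
  classical
  have key : ∀ ω : ι → Bool, wt p ω * ∏ e ∈ s, (if ω e then x else 1)
      = ∏ e : ι, ((if ω e then p else 1 - p) * (if e ∈ s then (if ω e then x else 1) else 1)) := by
    intro ω
    rw [Finset.prod_mul_distrib]
    unfold wt
    congr 1
    rw [← Finset.prod_subset (Finset.subset_univ s)
      (fun e _ he => by rw [if_neg he])]
    exact (Finset.prod_congr rfl fun e he => by rw [if_pos he]).symm
  rw [Finset.sum_congr rfl fun ω _ => key ω,
    sum_prod_bool (ι := ι) (fun e b => (if b then p else 1 - p)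
      * (if e ∈ s then (if b then x else 1) else 1))]
  have key2 : ∀ e : ι, (if (true : Bool) then p else 1 - p) * (if e ∈ s then (if (true:Bool) then x else 1) else 1)
      + (if (false : Bool) then p else 1 - p) * (if e ∈ s then (if (false:Bool) then x else 1) else 1)
      = if e ∈ s then p * x + (1 - p) else 1 := by
    intro e
    by_cases he : e ∈ s <;> simp [he] <;> linarith
  rw [Finset.prod_congr rfl fun e _ => key2 e]
  rw [← Finset.prod_subset (Finset.subset_univ s) (fun e _ he => by rw [if_neg he])]
  rw [Finset.prod_congr rfl fun e he => by rw [if_pos he]]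
  exact Finset.prod_const _

lemma wsum_ind_prod_ite (hpq : p + (1 - p) = 1) (s : Finset ι) {e₀ : ι} (he₀ : e₀ ∈ s) (x : ℝ) :
    ∑ ω : ι → Bool, wt p ω * ((if ω e₀ then 1 else 0) * ∏ e ∈ s, (if ω e then x else 1))
      = p * x * (p * x + (1 - p)) ^ (s.card - 1) := by
  classical
  have key : ∀ ω : ι → Bool,
      wt p ω * ((if ω e₀ then 1 else 0) * ∏ e ∈ s, (if ω e then x else 1))
      = ∏ e : ι, ((if ω e then p else 1 - p) * ((if e = e₀ then (if ω e then (1:ℝ) else 0) else 1)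
          * (if e ∈ s then (if ω e then x else 1) else 1))) := by
    intro ω
    rw [Finset.prod_mul_distrib, Finset.prod_mul_distrib]
    unfold wt
    congr 1
    congr 1
    · rw [Finset.prod_ite_eq' univ e₀ (fun e => if ω e then (1:ℝ) else 0), if_pos (mem_univ e₀)]
    · rw [← Finset.prod_subset (Finset.subset_univ s)
        (fun e _ he => by rw [if_neg he])]
      exact (Finset.prod_congr rfl fun e he => by rw [if_pos he]).symm
  rw [Finset.sum_congr rfl fun ω _ => key ω,
    sum_prod_bool (ι := ι) (fun e b => (if b then p else 1 - p)
      * ((if e = e₀ then (if b then (1:ℝ) else 0) else 1)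
        * (if e ∈ s then (if b then x else 1) else 1)))]
  have key2 : ∀ e : ι,
      (if (true : Bool) then p else 1 - p) * ((if e = e₀ then (if (true:Bool) then (1:ℝ) else 0) else 1)
        * (if e ∈ s then (if (true:Bool) then x else 1) else 1))
      + (if (false : Bool) then p else 1 - p) * ((if e = e₀ then (if (false:Bool) then (1:ℝ) else 0) else 1)
        * (if e ∈ s then (if (false:Bool) then x else 1) else 1))
      = if e = e₀ then p * x else (if e ∈ s then p * x + (1 - p) else 1) := by
    intro e
    by_cases he : e = e₀
    · subst he; simp [he₀]
    · by_cases hs : e ∈ s <;> simp [he, hs] <;> linarith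
  rw [Finset.prod_congr rfl fun e _ => key2 e]
  rw [← Finset.mul_prod_erase univ _ (mem_univ e₀), if_pos rfl]
  congr 1
  have key3 : ∀ e ∈ univ.erase e₀,
      (if e = e₀ then p * x else (if e ∈ s then p * x + (1 - p) else 1))
      = (if e ∈ s.erase e₀ then p * x + (1 - p) else 1) := by
    intro e he
    have hne : e ≠ e₀ := (Finset.mem_erase.mp he).1
    rw [if_neg hne]
    by_cases hs : e ∈ s
    · rw [if_pos hs, if_pos (Finset.mem_erase.mpr ⟨hne, hs⟩)]
    · rw [if_neg hs, if_neg (fun hc => hs (Finset.mem_of_mem_erase hc))]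
  rw [Finset.prod_congr rfl key3]
  rw [← Finset.prod_subset (Finset.erase_subset_erase e₀ (Finset.subset_univ s))
    (fun e _ he => by rw [if_neg he])]
  rw [Finset.prod_congr rfl fun e he => by rw [if_pos he]]
  rw [Finset.prod_const, Finset.card_erase_of_mem he₀]

lemma wsum_ind (hpq : p + (1 - p) = 1) (e₀ : ι) :
    ∑ ω : ι → Bool, wt p ω * (if ω e₀ then (1:ℝ) else 0) = p := by
  classical
  have h := wsum_ind_prod_ite (ι := ι) hpq (s := {e₀}) (Finset.mem_singleton_self e₀) 1
  simp only [Finset.prod_singleton, Finset.card_singleton] at h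
  calc ∑ ω : ι → Bool, wt p ω * (if ω e₀ then (1:ℝ) else 0)
      = ∑ ω : ι → Bool, wt p ω * ((if ω e₀ then (1:ℝ) else 0) * (if ω e₀ then 1 else 1)) := by
        refine Finset.sum_congr rfl fun ω _ => by by_cases h' : ω e₀ <;> simp [h']
    _ = p * 1 * (p * 1 + (1 - p)) ^ (1 - 1) := h
    _ = p := by norm_num

end Expect


section Graph

variable {n : ℕ}

lemma adj_irrefl (ω : EdgeIdx n → Bool) (v : Fin n) : ¬ adj ω v v := by
  unfold adj; simp

lemma adj_iff_lt (ω : EdgeIdx n → Bool) {u v : Fin n} (h : u < v) :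
    adj ω u v ↔ ω ⟨(u, v), h⟩ = true := by
  unfold adj; rw [dif_pos h]

lemma adj_iff_gt (ω : EdgeIdx n → Bool) {u v : Fin n} (h : v < u) :
    adj ω u v ↔ ω ⟨(v, u), h⟩ = true := by
  unfold adj; rw [dif_neg (asymm h), dif_pos h]

lemma adj_comm (ω : EdgeIdx n → Bool) (u v : Fin n) : adj ω u v ↔ adj ω v u := by
  rcases lt_trichotomy u v with h | h | h
  · rw [adj_iff_lt ω h, adj_iff_gt ω h]
  · subst h; exact Iff.rfl
  · rw [adj_iff_gt ω h, adj_iff_lt ω h]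

lemma adj_mono {ω ω' : EdgeIdx n → Bool} (h : ω ≤ ω') (u v : Fin n) :
    adj ω u v → adj ω' u v := by
  unfold adj
  split_ifs with h1 h2
  · exact fun hx => Bool.le_iff_imp.mp (h _) hx
  · exact fun hx => Bool.le_iff_imp.mp (h _) hx
  · exact id

lemma deg_mono (v : Fin n) : Monotone (fun ω : EdgeIdx n → Bool => deg ω v) := by
  intro ω ω' h
  apply Finset.card_le_card
  intro w hw
  simp only [Finset.mem_filter, Finset.mem_univ, true_and] at hw ⊢
  exact adj_mono h v w hw

lemma isolCount_anti : Antitone (fun ω : EdgeIdx n → Bool => isolCount ω) := by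
  intro ω ω' h
  apply Finset.card_le_card
  intro u hu
  simp only [Finset.mem_filter, Finset.mem_univ, true_and] at hu ⊢
  exact Nat.le_zero.mp (hu ▸ deg_mono u h)

lemma degDel_le_deg (ω : EdgeIdx n → Bool) (v' v : Fin n) : degDel ω v' v ≤ deg ω v := by
  apply Finset.card_le_card
  intro w hw
  simp only [Finset.mem_filter, Finset.mem_univ, true_and] at hw ⊢
  exact hw.1

lemma isolCount_le_isolCountDel (ω : EdgeIdx n → Bool) (v : Fin n) :
    isolCount ω ≤ isolCountDel ω v := by
  apply Finset.card_le_card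
  intro u hu
  simp only [Finset.mem_filter, Finset.mem_univ, true_and] at hu ⊢
  exact Nat.le_zero.mp (hu ▸ degDel_le_deg ω v u)

lemma isolCountDel_le (ω : EdgeIdx n → Bool) (v : Fin n) :
    isolCountDel ω v ≤ isolCount ω + 1 + deg ω v := by
  classical
  have hsub : (Finset.univ.filter fun u => degDel ω v u = 0)
      ⊆ (Finset.univ.filter fun u => deg ω u = 0)
        ∪ ({v} ∪ (Finset.univ.filter fun w => adj ω v w)) := by
    intro u hu
    simp only [Finset.mem_filter, Finset.mem_univ, true_and] at hu
    by_cases hdeg : deg ω u = 0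
    · exact Finset.mem_union_left _ (by simp [hdeg])
    · refine Finset.mem_union_right _ ?_
      by_cases huv : u = v
      · exact Finset.mem_union_left _ (by simp [huv])
      · refine Finset.mem_union_right _ ?_
        have hne : (Finset.univ.filter fun w => adj ω u w).Nonempty := by
          rw [← Finset.card_ne_zero]
          exact hdeg
        obtain ⟨w, hw⟩ := hne
        simp only [Finset.mem_filter, Finset.mem_univ, true_and] at hw
        have hempty : (Finset.univ.filter fun w => adjDel ω v u w) = ∅ :=
          Finset.card_eq_zero.mp hu
        have hwv : w = v := by
          by_contra hwv
          have : w ∈ (Finset.univ.filter fun w => adjDel ω v u w) := by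
            simp only [Finset.mem_filter, Finset.mem_univ, true_and]
            exact ⟨hw, huv, hwv⟩
          rw [hempty] at this
          exact absurd this (Finset.notMem_empty w)
        rw [hwv] at hw
        simp only [Finset.mem_filter, Finset.mem_univ, true_and]
        exact (adj_comm ω u v).mp hw
  calc isolCountDel ω v ≤ ((Finset.univ.filter fun u => deg ω u = 0)
        ∪ ({v} ∪ (Finset.univ.filter fun w => adj ω v w))).card := Finset.card_le_card hsub
    _ ≤ (Finset.univ.filter fun u => deg ω u = 0).card
        + ({v} ∪ (Finset.univ.filter fun w => adj ω v w)).card := Finset.card_union_le _ _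
    _ ≤ (Finset.univ.filter fun u => deg ω u = 0).card
        + (1 + (Finset.univ.filter fun w => adj ω v w).card) := by
          have h1 := Finset.card_union_le ({v} : Finset (Fin n))
            (Finset.univ.filter fun w => adj ω v w)
          simp only [Finset.card_singleton] at h1
          omega
    _ = isolCount ω + 1 + deg ω v := by rw [isolCount, deg]; omega

lemma deg_top (v : Fin n) : deg (fun _ => true) v = n - 1 := by
  unfold deg
  have h : (Finset.univ.filter fun w => adj (fun _ => true) v w) = Finset.univ.erase v := by
    ext w
    simp only [Finset.mem_filter, Finset.mem_univ, true_and, Finset.mem_erase, and_true]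
    rcases lt_trichotomy v w with h | h | h
    · rw [adj_iff_lt _ h]; simp [ne_of_gt h]
    · subst h; simp [adj_irrefl]
    · rw [adj_iff_gt _ h]; simp [ne_of_lt h]
  rw [h, Finset.card_erase_of_mem (Finset.mem_univ v), Finset.card_univ, Fintype.card_fin]

/-- edges incident to `v` -/
def inc (v : Fin n) : Finset (EdgeIdx n) :=
  Finset.univ.filter (fun e => e.1.1 = v ∨ e.1.2 = v)

lemma deg_eq_sum (ω : EdgeIdx n → Bool) (v : Fin n) :
    deg ω v = ∑ e ∈ inc v, (if ω e then 1 else 0) := by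
  classical
  unfold deg
  rw [Finset.card_filter]
  rw [← Finset.sum_erase_add Finset.univ _ (Finset.mem_univ v),
    if_neg (adj_irrefl ω v), add_zero]
  refine Finset.sum_bij'
    (fun w hw => if h : v < w then (⟨(v, w), h⟩ : EdgeIdx n)
      else ⟨(w, v), lt_of_le_of_ne (not_lt.mp h) (Finset.mem_erase.mp hw).1⟩)
    (fun e _ => if e.1.1 = v then e.1.2 else e.1.1) ?_ ?_ ?_ ?_ ?_
  · intro w hw
    by_cases h : v < w
    · rw [dif_pos h]; simp [inc]
    · rw [dif_neg h]; simp [inc]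
  · intro e he
    simp only [inc, Finset.mem_filter, Finset.mem_univ, true_and] at he
    by_cases h1 : e.1.1 = v
    · rw [if_pos h1]
      exact Finset.mem_erase.mpr ⟨ne_of_gt (h1 ▸ e.2), Finset.mem_univ _⟩
    · rw [if_neg h1]
      exact Finset.mem_erase.mpr ⟨h1, Finset.mem_univ _⟩
  · intro w hw
    by_cases h : v < w
    · rw [dif_pos h]
      simp
    · have hne : w ≠ v := (Finset.mem_erase.mp hw).1
      rw [dif_neg h]
      simp [hne]
  · intro e he
    simp only [inc, Finset.mem_filter, Finset.mem_univ, true_and] at he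
    by_cases h1 : e.1.1 = v
    · have hlt : v < e.1.2 := h1 ▸ e.2
      simp only [if_pos h1, dif_pos hlt]
      exact Subtype.ext (Prod.ext h1.symm rfl)
    · have h2 : e.1.2 = v := he.resolve_left h1
      have hlt : ¬ v < e.1.1 := by
        rw [← h2]; exact asymm e.2
      simp only [if_neg h1, dif_neg hlt]
      exact Subtype.ext (Prod.ext rfl h2.symm)
  · intro w hw
    by_cases h : v < w
    · rw [dif_pos h]
      exact if_congr (adj_iff_lt ω h) rfl rfl
    · have hne : w ≠ v := (Finset.mem_erase.mp hw).1
      have hlt : w < v := lt_of_le_of_ne (not_lt.mp h) hne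
      rw [dif_neg h]
      exact if_congr (adj_iff_gt ω hlt) rfl rfl

lemma inc_card (v : Fin n) : (inc v).card = n - 1 := by
  have h := deg_eq_sum (fun _ => true) v
  rw [deg_top] at h
  simpa using h.symm

lemma exp_theta_deg (θ : ℝ) (ω : EdgeIdx n → Bool) (v : Fin n) :
    Real.exp (θ * (deg ω v : ℝ)) = ∏ e ∈ inc v, (if ω e then Real.exp θ else 1) := by
  have h : θ * (deg ω v : ℝ) = ∑ e ∈ inc v, (if ω e then θ else 0) := by
    rw [deg_eq_sum]
    push_cast
    rw [Finset.mul_sum]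
    exact Finset.sum_congr rfl fun e _ => by by_cases h : ω e <;> simp [h]
  rw [h, Real.exp_sum]
  exact Finset.prod_congr rfl fun e _ => by by_cases h : ω e <;> simp [h]

end Graph


section Trapezoid

lemma exp_trapezoid {t : ℝ} (ht : 0 ≤ t) : Real.exp t - 1 ≤ t * (1 + Real.exp t) / 2 := by
  set h : ℝ → ℝ := fun t => t * (1 + Real.exp t) / 2 - (Real.exp t - 1) with hh
  have hd : ∀ x : ℝ, HasDerivAt h ((1 + Real.exp x) / 2 + x * Real.exp x / 2 - Real.exp x) x := by
    intro x
    have h1 : HasDerivAt (fun y : ℝ => y * (1 + Real.exp y))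
        (1 * (1 + Real.exp x) + x * Real.exp x) x := by
      have := (hasDerivAt_id x).fun_mul ((hasDerivAt_const x 1).fun_add (Real.hasDerivAt_exp x))
      simpa using this
    have h2 := (h1.div_const 2).fun_sub ((Real.hasDerivAt_exp x).sub_const 1)
    refine h2.congr_deriv ?_
    ring
  have hmono : MonotoneOn h (Set.Ici (0:ℝ)) := by
    apply monotoneOn_of_deriv_nonneg (convex_Ici 0)
    · exact Continuous.continuousOn (by fun_prop)
    · intro x _
      exact (hd x).differentiableAt.differentiableWithinAt
    · intro x hx
      rw [(hd x).deriv]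
      rw [interior_Ici] at hx
      have hx0 : (0:ℝ) ≤ x := le_of_lt hx
      have key : (1 - x) * Real.exp x ≤ 1 := by
        have h1 : -x + 1 ≤ Real.exp (-x) := Real.add_one_le_exp (-x)
        have h2 : Real.exp (-x) * Real.exp x = 1 := by
          rw [← Real.exp_add]; simp
        calc (1 - x) * Real.exp x = (-x + 1) * Real.exp x := by ring
          _ ≤ Real.exp (-x) * Real.exp x :=
              mul_le_mul_of_nonneg_right h1 (Real.exp_pos x).le
          _ = 1 := h2
      nlinarith [Real.exp_pos x]
  have h0 : h 0 = 0 := by simp [hh]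
  have := hmono (Set.self_mem_Ici) (Set.mem_Ici.mpr ht) ht
  rw [h0] at this
  simp only [hh] at this
  linarith

lemma pathwise_bound {θ : ℝ} (hθ : 0 ≤ θ) {a b d : ℕ} (hab : a ≤ b) (hbd : b ≤ a + 1 + d) :
    Real.exp (θ * (b:ℝ)) - Real.exp (θ * (a:ℝ))
      ≤ θ / 2 * ((1 + (d:ℝ)) * (1 + Real.exp (θ * (1 + (d:ℝ))))) * Real.exp (θ * (a:ℝ)) := by
  have hab' : (a:ℝ) ≤ (b:ℝ) := Nat.cast_le.mpr hab
  have hbd' : (b:ℝ) ≤ (a:ℝ) + 1 + (d:ℝ) := by exact_mod_cast hbd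
  set t : ℝ := θ * ((b:ℝ) - (a:ℝ)) with hT
  have ht0 : 0 ≤ t := mul_nonneg hθ (by linarith)
  have hsplit : Real.exp (θ * (b:ℝ)) = Real.exp (θ * (a:ℝ)) * Real.exp t := by
    rw [← Real.exp_add]; congr 1; ring
  have htrap := exp_trapezoid ht0
  have hea : (0:ℝ) < Real.exp (θ * (a:ℝ)) := Real.exp_pos _
  have hstep1 : Real.exp (θ * (b:ℝ)) - Real.exp (θ * (a:ℝ))
      ≤ Real.exp (θ * (a:ℝ)) * (t * (1 + Real.exp t) / 2) := by
    rw [hsplit, ← mul_sub_one]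
    exact mul_le_mul_of_nonneg_left htrap hea.le
  refine hstep1.trans ?_
  have hts : t ≤ θ * (1 + (d:ℝ)) := by
    rw [hT]
    apply mul_le_mul_of_nonneg_left _ hθ
    linarith
  have het : Real.exp t ≤ Real.exp (θ * (1 + (d:ℝ))) := Real.exp_le_exp.mpr hts
  have hmain : t * (1 + Real.exp t) / 2
      ≤ θ / 2 * ((1 + (d:ℝ)) * (1 + Real.exp (θ * (1 + (d:ℝ))))) := by
    have h1 : t * (1 + Real.exp t) ≤ (θ * (1 + (d:ℝ))) * (1 + Real.exp (θ * (1 + (d:ℝ)))) := by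
      apply mul_le_mul hts (by linarith) (by positivity) ?_
      positivity
    linarith
  calc Real.exp (θ * (a:ℝ)) * (t * (1 + Real.exp t) / 2)
      ≤ Real.exp (θ * (a:ℝ)) * (θ / 2 * ((1 + (d:ℝ)) * (1 + Real.exp (θ * (1 + (d:ℝ)))))) :=
        mul_le_mul_of_nonneg_left hmain hea.le
    _ = θ / 2 * ((1 + (d:ℝ)) * (1 + Real.exp (θ * (1 + (d:ℝ))))) * Real.exp (θ * (a:ℝ)) := by
        ring

end Trapezoid


section Gamma

set_option maxHeartbeats 2000000 in
lemma wsum_g {n : ℕ} (hn : 2 ≤ n) (p θ : ℝ) (v : Fin n) :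
    ∑ ω : EdgeIdx n → Bool, wt p ω *
        ((1 + (deg ω v : ℝ)) * (1 + Real.exp (θ * (1 + (deg ω v : ℝ)))))
      = Real.exp θ * ((((n:ℝ) - 1) * p * Real.exp θ * (p * Real.exp θ + 1 - p) ^ (n - 2))
          + (p * Real.exp θ + 1 - p) ^ (n - 1)) + ((n:ℝ) - 1) * p + 1 := by
  classical
  have hpq : p + (1 - p) = 1 := by ring
  have hcast : ((n - 1 : ℕ) : ℝ) = (n : ℝ) - 1 := by
    rw [Nat.cast_sub (by omega : 1 ≤ n)]; simp
  set X := Real.exp θ with hX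
  have key : ∀ ω : EdgeIdx n → Bool,
      wt p ω * ((1 + (deg ω v : ℝ)) * (1 + Real.exp (θ * (1 + (deg ω v : ℝ)))))
      = wt p ω
        + (∑ e ∈ inc v, wt p ω * (if ω e then (1:ℝ) else 0))
        + X * (wt p ω * ∏ e ∈ inc v, (if ω e then X else 1))
        + X * (∑ e₀ ∈ inc v, wt p ω * ((if ω e₀ then (1:ℝ) else 0)
            * ∏ e ∈ inc v, (if ω e then X else 1))) := by
    intro ω
    have hd : (deg ω v : ℝ) = ∑ e ∈ inc v, (if ω e then (1:ℝ) else 0) := by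
      rw [deg_eq_sum]
      push_cast
      ring
    have hexp : Real.exp (θ * (1 + (deg ω v : ℝ)))
        = X * ∏ e ∈ inc v, (if ω e then X else 1) := by
      rw [mul_add, mul_one, Real.exp_add, exp_theta_deg θ ω v]
    have h1 : wt p ω * (∑ e ∈ inc v, (if ω e then (1:ℝ) else 0))
        = ∑ e ∈ inc v, wt p ω * (if ω e then (1:ℝ) else 0) := Finset.mul_sum _ _ _
    have h2 : wt p ω * ((∑ e₀ ∈ inc v, (if ω e₀ then (1:ℝ) else 0))
          * ∏ e ∈ inc v, (if ω e then X else 1))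
        = ∑ e₀ ∈ inc v, wt p ω * ((if ω e₀ then (1:ℝ) else 0)
            * ∏ e ∈ inc v, (if ω e then X else 1)) := by
      rw [Finset.sum_mul, Finset.mul_sum]
    rw [hexp, hd, ← h1, ← h2]
    ring
  rw [Finset.sum_congr rfl fun ω _ => key ω]
  rw [Finset.sum_add_distrib, Finset.sum_add_distrib, Finset.sum_add_distrib]
  have T0 : ∑ ω : EdgeIdx n → Bool, wt p ω = 1 := wt_sum_one
  have T1 : ∑ ω : EdgeIdx n → Bool, ∑ e ∈ inc v, wt p ω * (if ω e then (1:ℝ) else 0)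
      = ((n:ℝ) - 1) * p := by
    rw [Finset.sum_comm]
    rw [Finset.sum_congr rfl fun e _ => wsum_ind (ι := EdgeIdx n) hpq e]
    rw [Finset.sum_const, inc_card, nsmul_eq_mul, hcast]
  have T2 : ∑ ω : EdgeIdx n → Bool, X * (wt p ω * ∏ e ∈ inc v, (if ω e then X else 1))
      = X * (p * X + (1 - p)) ^ (n - 1) := by
    rw [← Finset.mul_sum, wsum_prod_ite hpq (inc v) X, inc_card]
  have T3 : ∑ ω : EdgeIdx n → Bool, X * (∑ e₀ ∈ inc v, wt p ω * ((if ω e₀ then (1:ℝ) else 0)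
        * ∏ e ∈ inc v, (if ω e then X else 1)))
      = X * (((n:ℝ) - 1) * (p * X * (p * X + (1 - p)) ^ (n - 2))) := by
    rw [← Finset.mul_sum]
    congr 1
    rw [Finset.sum_comm]
    rw [Finset.sum_congr rfl fun e he => wsum_ind_prod_ite hpq (inc v) he X]
    rw [Finset.sum_const, inc_card, nsmul_eq_mul, hcast]
    congr 2
  rw [T0, T1, T2, T3]
  ring

end Gamma


section Meas

variable {n : ℕ} {p : ℝ}

lemma bern_singleton (b : Bool) :
    bern p {b} = ENNReal.ofReal (if b then p else 1 - p) := by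
  cases b <;> simp [bern]

lemma bern_prob (hp0 : 0 ≤ p) (hp1 : p ≤ 1) : IsProbabilityMeasure (bern p) := by
  constructor
  have : (Set.univ : Set Bool) = {true} ∪ {false} := by
    ext b; cases b <;> simp
  rw [this]
  rw [measure_union (by simp) (measurableSet_singleton false)]
  rw [bern_singleton, bern_singleton]
  have h1 : (if (true:Bool) = true then p else 1 - p) = p := if_pos rfl
  have h2 : (if (false:Bool) = true then p else 1 - p) = 1 - p := if_neg (by simp)
  rw [h1, h2, ← ENNReal.ofReal_add hp0 (by linarith)]
  norm_num

lemma gnp_prob (hp0 : 0 ≤ p) (hp1 : p ≤ 1) : IsProbabilityMeasure (gnp n p) := by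
  haveI := bern_prob hp0 hp1
  unfold gnp
  infer_instance

lemma gnp_singleton (hp0 : 0 ≤ p) (hp1 : p ≤ 1) (ω : EdgeIdx n → Bool) :
    gnp n p {ω} = ENNReal.ofReal (wt p ω) := by
  have hset : ({ω} : Set (EdgeIdx n → Bool)) = Set.univ.pi (fun e => {ω e}) := by
    ext ω'
    simp [Set.mem_pi, funext_iff]
  rw [gnp, hset, Measure.pi_pi]
  rw [Finset.prod_congr rfl fun e _ => bern_singleton (p := p) (ω e)]
  rw [wt, ENNReal.ofReal_prod_of_nonneg
    (fun e _ => by by_cases h : ω e <;> simp [h] <;> linarith)]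

lemma integral_gnp (hp0 : 0 ≤ p) (hp1 : p ≤ 1) (f : (EdgeIdx n → Bool) → ℝ) :
    ∫ ω, f ω ∂(gnp n p) = ∑ ω : EdgeIdx n → Bool, wt p ω * f ω := by
  haveI := gnp_prob (n := n) hp0 hp1
  rw [MeasureTheory.integral_fintype (Integrable.of_finite)]
  refine Finset.sum_congr rfl fun ω _ => ?_
  rw [Measure.real, gnp_singleton hp0 hp1, ENNReal.toReal_ofReal (wt_nonneg hp0 hp1 ω), smul_eq_mul]

lemma gnpV_singleton (hn : 2 ≤ n) (hp0 : 0 ≤ p) (hp1 : p ≤ 1)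
    (ω : EdgeIdx n → Bool) (v : Fin n) :
    ((gnpV n p) {(ω, v)}).toReal = wt p ω * (n:ℝ)⁻¹ := by
  rw [gnpV, ← Set.singleton_prod_singleton, Measure.prod_prod, gnp_singleton hp0 hp1]
  rw [uniformOn_univ, Measure.count_singleton, Fintype.card_fin]
  rw [ENNReal.toReal_mul, ENNReal.toReal_ofReal (wt_nonneg hp0 hp1 ω)]
  congr 1
  rw [ENNReal.toReal_div, ENNReal.toReal_one, ENNReal.toReal_natCast, one_div]

lemma integral_gnpV (hn : 2 ≤ n) (hp0 : 0 ≤ p) (hp1 : p ≤ 1)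
    (F : (EdgeIdx n → Bool) × Fin n → ℝ) :
    ∫ x, F x ∂(gnpV n p)
      = (n:ℝ)⁻¹ * ∑ v : Fin n, ∑ ω : EdgeIdx n → Bool, wt p ω * F (ω, v) := by
  haveI := gnp_prob (n := n) hp0 hp1
  haveI : Nonempty (Fin n) := ⟨⟨0, by omega⟩⟩
  haveI := uniformOn_isProbabilityMeasure (Set.finite_univ (α := Fin n)) Set.univ_nonempty
  haveI : IsProbabilityMeasure (gnpV n p) := by
    rw [gnpV]; infer_instance
  rw [MeasureTheory.integral_fintype (Integrable.of_finite)]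
  rw [Fintype.sum_prod_type]
  rw [Finset.sum_comm]
  rw [Finset.mul_sum]
  refine Finset.sum_congr rfl fun v _ => ?_
  rw [Finset.mul_sum]
  refine Finset.sum_congr rfl fun ω _ => ?_
  rw [Measure.real, gnpV_singleton hn hp0 hp1, smul_eq_mul]
  ring

end Meas

/-- bound on `E(e^{θ Y^s} − e^{θ Y})` for `θ ≥ 0`. -/
theorem exp_size_bias_diff_bound (n : ℕ) (hn : 2 ≤ n) (p : ℝ)
    (hp : p ∈ Set.Ioo (0 : ℝ) 1)
    (α φ γ : ℝ → ℝ)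
    (hα : ∀ θ, α θ = (p * Real.exp θ + 1 - p) ^ (n - 1))
    (hφ : ∀ θ, φ θ = ((n : ℝ) - 1) * p * Real.exp θ * (p * Real.exp θ + 1 - p) ^ (n - 2))
    (hγ : ∀ θ, γ θ = Real.exp θ * (φ θ + α θ) + ((n : ℝ) - 1) * p + 1) :
    ∀ θ : ℝ, 0 ≤ θ →
      ∫ x, (Real.exp (θ * (isolCountDel x.1 x.2 : ℝ))
          - Real.exp (θ * (isolCount x.1 : ℝ))) ∂(gnpV n p)
        ≤ θ * γ θ / 2 * ∫ ω, Real.exp (θ * (isolCount ω : ℝ)) ∂(gnp n p) := by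
  intro θ hθ
  obtain ⟨hp0', hp1'⟩ := hp
  have hp0 : (0:ℝ) ≤ p := le_of_lt hp0'
  have hp1 : p ≤ 1 := le_of_lt hp1'
  rw [integral_gnpV hn hp0 hp1, integral_gnp hp0 hp1]
  set f : (EdgeIdx n → Bool) → ℝ := fun ω => Real.exp (θ * (isolCount ω : ℝ)) with hf
  set S : ℝ := ∑ ω : EdgeIdx n → Bool, wt p ω * f ω with hS
  have hfanti : Antitone f := by
    intro ω ω' h
    exact Real.exp_le_exp.mpr
      (mul_le_mul_of_nonneg_left (Nat.cast_le.mpr (isolCount_anti h)) hθ)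
  have key : ∀ v : Fin n,
      ∑ ω : EdgeIdx n → Bool, wt p ω
          * (Real.exp (θ * (isolCountDel ω v : ℝ)) - Real.exp (θ * (isolCount ω : ℝ)))
        ≤ θ * γ θ / 2 * S := by
    intro v
    set g : (EdgeIdx n → Bool) → ℝ :=
      fun ω => (1 + (deg ω v : ℝ)) * (1 + Real.exp (θ * (1 + (deg ω v : ℝ)))) with hg
    have hgmono : Monotone g := by
      intro ω ω' h
      have hd : (deg ω v : ℝ) ≤ (deg ω' v : ℝ) := Nat.cast_le.mpr (deg_mono v h)
      have hd0 : (0:ℝ) ≤ (deg ω v : ℝ) := Nat.cast_nonneg _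
      have e1 : Real.exp (θ * (1 + (deg ω v:ℝ))) ≤ Real.exp (θ * (1 + (deg ω' v:ℝ))) :=
        Real.exp_le_exp.mpr (by nlinarith)
      have e2 := Real.exp_pos (θ * (1 + (deg ω v:ℝ)))
      simp only [hg]
      apply mul_le_mul (by linarith) (by linarith) (by positivity) (by positivity)
    have hgamma : ∑ ω : EdgeIdx n → Bool, wt p ω * g ω = γ θ := by
      rw [hγ θ, hα θ, hφ θ]
      simpa only [hg] using wsum_g hn p θ v
    have step1 : ∑ ω : EdgeIdx n → Bool, wt p ω
          * (Real.exp (θ * (isolCountDel ω v : ℝ)) - Real.exp (θ * (isolCount ω : ℝ)))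
        ≤ ∑ ω : EdgeIdx n → Bool, θ / 2 * (wt p ω * (f ω * g ω)) := by
      refine Finset.sum_le_sum fun ω _ => ?_
      have hpw := pathwise_bound hθ (isolCount_le_isolCountDel ω v) (isolCountDel_le ω v)
      calc wt p ω * (Real.exp (θ * (isolCountDel ω v : ℝ)) - Real.exp (θ * (isolCount ω : ℝ)))
          ≤ wt p ω * (θ / 2 * ((1 + (deg ω v : ℝ))
              * (1 + Real.exp (θ * (1 + (deg ω v : ℝ))))) * Real.exp (θ * (isolCount ω : ℝ))) :=
            mul_le_mul_of_nonneg_left hpw (wt_nonneg hp0 hp1 ω)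
        _ = θ / 2 * (wt p ω * (f ω * g ω)) := by simp only [hf, hg]; ring
    have step2 : ∑ ω : EdgeIdx n → Bool, θ / 2 * (wt p ω * (f ω * g ω))
        ≤ θ / 2 * (S * γ θ) := by
      rw [← Finset.mul_sum]
      apply mul_le_mul_of_nonneg_left _ (by linarith : (0:ℝ) ≤ θ / 2)
      rw [hS, ← hgamma]
      exact Harris.harris hp0 hp1 f g hfanti hgmono
    calc ∑ ω : EdgeIdx n → Bool, wt p ω
          * (Real.exp (θ * (isolCountDel ω v : ℝ)) - Real.exp (θ * (isolCount ω : ℝ)))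
        ≤ θ / 2 * (S * γ θ) := step1.trans step2
      _ = θ * γ θ / 2 * S := by ring
  have hn0 : (n:ℝ) ≠ 0 := Nat.cast_ne_zero.mpr (by omega)
  calc (n:ℝ)⁻¹ * ∑ v : Fin n, ∑ ω : EdgeIdx n → Bool, wt p ω
          * (Real.exp (θ * (isolCountDel ω v : ℝ)) - Real.exp (θ * (isolCount ω : ℝ)))
      ≤ (n:ℝ)⁻¹ * ∑ v : Fin n, θ * γ θ / 2 * S := by
        apply mul_le_mul_of_nonneg_left (Finset.sum_le_sum fun v _ => key v)
        positivity
    _ = θ * γ θ / 2 * S := by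
        rw [Finset.sum_const, Finset.card_univ, Fintype.card_fin, nsmul_eq_mul]
        field_simp

end ErdosRenyiIsolated
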